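/- There exists a universal constant c₁ > 0 with the following property: for all reals x, y > 0 and t ≥ 0, if f ≥ 0 is the unique nonnegative real with cosh f = (cosh t + cosh x · cosh y)/(sinh x · sinh y), then f ≥ c₁ · (e^{-x} + e^{-y} + e^{-(1/2)(x + y - t)_+} + (t - x - y)_+). -/

import Mathlib

open Real

lemma key_lemma {u f : ℝ} (hu : 0 ≤ u) (hf : 0 ≤ f)
    (h : 1 + 2 * u ^ 2 ≤ Real.cosh f) : 2 * Real.log (1 + u) ≤ f := by
  have hv : (0:ℝ) < 1 + u := by linarith
  have h1 : Real.cosh (2 * Real.log (1 + u)) ≤ 1 + 2 * u ^ 2 := by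
    rw [Real.cosh_eq]
    have e1 : Real.exp (2 * Real.log (1 + u)) = (1 + u) ^ 2 := by
      rw [mul_comm, Real.exp_mul, Real.exp_log hv]; norm_num
    have e2 : Real.exp (-(2 * Real.log (1 + u))) = ((1 + u) ^ 2)⁻¹ := by
      rw [Real.exp_neg, e1]
    rw [e1, e2, div_le_iff₀ (by positivity)]
    have hm : ((1 + u) ^ 2)⁻¹ * (1 + u) ^ 2 = 1 := by field_simp
    have hz : (0:ℝ) < ((1 + u) ^ 2)⁻¹ := by positivity
    nlinarith [sq_nonneg u, sq_nonneg (u * (1 + u)), mul_pos hz hz,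
      mul_nonneg (mul_nonneg hu hu) hu]
  have h2 : Real.cosh (2 * Real.log (1 + u)) ≤ Real.cosh f := h1.trans h
  have h3 := Real.cosh_le_cosh.mp h2
  have hl : 0 ≤ Real.log (1 + u) := Real.log_nonneg (by linarith)
  rwa [abs_of_nonneg (by linarith), abs_of_nonneg hf] at h3

lemma log_ge {u : ℝ} (hu : 0 ≤ u) : 1 - 1 / (1 + u) ≤ Real.log (1 + u) := by
  have hv : (0:ℝ) < 1 + u := by linarith
  have h := Real.add_one_le_exp (-(Real.log (1 + u)))
  rw [Real.exp_neg, Real.exp_log hv, ← one_div] at h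
  linarith

lemma u_le_two_log {u : ℝ} (hu : 0 ≤ u) (hu1 : u ≤ 1) : u ≤ 2 * Real.log (1 + u) := by
  have h := log_ge hu
  have hv : (0:ℝ) < 1 + u := by linarith
  have hone : 1 / (1 + u) * (1 + u) = 1 := by field_simp
  have hd : u / 2 ≤ 1 - 1 / (1 + u) := by nlinarith [one_div_pos.mpr hv]
  linarith


lemma aux2 {a b E : ℝ} (ha0 : 0 < a) (hb0 : 0 < b) (ha1 : a < 1) (hb1 : b < 1) (hE : 0 < E) :
    2 * (E * a * b) * ((a⁻¹ - a) / 2 * ((b⁻¹ - b) / 2)) ≤ E / 2 := by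
  rw [← sub_nonneg]
  have expand : E / 2 - 2 * (E * a * b) * ((a⁻¹ - a) / 2 * ((b⁻¹ - b) / 2))
      = E * (1 - (1 - a^2) * (1 - b^2)) / 2 := by
    field_simp
  rw [expand]
  apply div_nonneg _ (by norm_num)
  apply mul_nonneg hE.le
  have h1 : 0 ≤ a^2 * (1 - b^2) := mul_nonneg (sq_nonneg a) (by nlinarith)
  nlinarith [sq_nonneg b, h1]

noncomputable def ppart (x : ℝ) : ℝ := max x 0

set_option maxHeartbeats 1000000 in
theorem stmt8 :
    ∃ c₁ : ℝ, 0 < c₁ ∧ ∀ x y t f : ℝ, 0 < x → 0 < y → 0 ≤ t → 0 ≤ f →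
      Real.cosh f = (Real.cosh t + Real.cosh x * Real.cosh y) / (Real.sinh x * Real.sinh y) →
      c₁ * (Real.exp (-x) + Real.exp (-y) + Real.exp (-(1/2) * ppart (x + y - t)) +
        ppart (t - x - y)) ≤ f := by
  refine ⟨1/10, by norm_num, fun x y t f hx hy ht hf hcosh => ?_⟩
  set a := Real.exp (-x) with ha_def
  set b := Real.exp (-y) with hb_def
  have hA : Real.exp x = a⁻¹ := by rw [ha_def, Real.exp_neg, inv_inv]
  have hB : Real.exp y = b⁻¹ := by rw [hb_def, Real.exp_neg, inv_inv]
  have ha0 : 0 < a := Real.exp_pos _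
  have hb0 : 0 < b := Real.exp_pos _
  have ha1 : a < 1 := by rw [ha_def]; exact Real.exp_lt_one_iff.mpr (by linarith)
  have hb1 : b < 1 := by rw [hb_def]; exact Real.exp_lt_one_iff.mpr (by linarith)
  have hsx : 0 < Real.sinh x := Real.sinh_pos_iff.mpr hx
  have hsy : 0 < Real.sinh y := Real.sinh_pos_iff.mpr hy
  have hS : 0 < Real.sinh x * Real.sinh y := mul_pos hsx hsy
  have heq : Real.cosh f * (Real.sinh x * Real.sinh y)
      = Real.cosh t + Real.cosh x * Real.cosh y := by
    rw [hcosh, div_mul_cancel₀ _ (ne_of_gt hS)]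
  have hsxe : Real.sinh x = (a⁻¹ - a) / 2 := by rw [Real.sinh_eq, hA]
  have hsye : Real.sinh y = (b⁻¹ - b) / 2 := by rw [Real.sinh_eq, hB]
  have hcxe : Real.cosh x = (a⁻¹ + a) / 2 := by rw [Real.cosh_eq, hA]
  have hcye : Real.cosh y = (b⁻¹ + b) / 2 := by rw [Real.cosh_eq, hB]
  have hct1 : 1 ≤ Real.cosh t := Real.one_le_cosh t
  have hcte : Real.exp t / 2 ≤ Real.cosh t := by
    rw [Real.cosh_eq]
    have := (Real.exp_pos (-t)).le
    linarith
  -- First bound: with u₁ = (a+b)/2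
  set u₁ : ℝ := (a + b) / 2 with hu₁_def
  have hu₁0 : 0 ≤ u₁ := by positivity
  have hu₁1 : u₁ ≤ 1 := by rw [hu₁_def]; linarith
  have hb1' : 1 + 2 * u₁ ^ 2 ≤ Real.cosh f := by
    rw [← mul_le_mul_iff_left₀ hS, heq, hsxe, hsye, hcxe, hcye, hu₁_def]
    have key : (1 + 2 * ((a + b) / 2) ^ 2) * ((a⁻¹ - a) / 2 * ((b⁻¹ - b) / 2))
        ≤ 1 + (a⁻¹ + a) / 2 * ((b⁻¹ + b) / 2) := by
      rw [← sub_nonneg]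
      have expand : 1 + (a⁻¹ + a) / 2 * ((b⁻¹ + b) / 2)
          - (1 + 2 * ((a + b) / 2) ^ 2) * ((a⁻¹ - a) / 2 * ((b⁻¹ - b) / 2))
          = (8*a*b + 2*(1+a^2)*(1+b^2) - (2+(a+b)^2)*(1-a^2)*(1-b^2)) / (8*a*b) := by
        field_simp
        ring
      rw [expand]
      apply div_nonneg _ (by positivity)
      have hab : a * b < 1 := by nlinarith
      have h3 : 0 ≤ 3 + (a+b)^2 - 2*(a*b) - (a*b)^2 := by nlinarith [mul_pos ha0 hb0]
      have h4 := mul_nonneg (sq_nonneg (a+b)) h3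
      have h5 : 8*a*b + 2*(1+a^2)*(1+b^2) - (2+(a+b)^2)*(1-a^2)*(1-b^2)
          = (a+b)^2 * (3 + (a+b)^2 - 2*(a*b) - (a*b)^2) := by ring
      linarith [h5.ge.trans_eq' rfl, h4, h5 ▸ h4]
    linarith
  have F1 : u₁ ≤ f := le_trans (u_le_two_log hu₁0 hu₁1) (key_lemma hu₁0 hf hb1')
  -- Second bound: with u₂ = exp ((t - x - y)/2)
  set u₂ : ℝ := Real.exp ((t - x - y) / 2) with hu₂_def
  have hu₂0 : 0 < u₂ := Real.exp_pos _
  have hu₂sq : u₂ ^ 2 = Real.exp t * a * b := by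
    rw [hu₂_def, ha_def, hb_def, sq, ← Real.exp_add, ← Real.exp_add, ← Real.exp_add]
    congr 1; ring
  have hE : 0 < Real.exp t := Real.exp_pos t
  have hb2' : 1 + 2 * u₂ ^ 2 ≤ Real.cosh f := by
    rw [← mul_le_mul_iff_left₀ hS, heq]
    have p1 : Real.sinh x * Real.sinh y ≤ Real.cosh x * Real.cosh y := by
      have h1 : Real.sinh x ≤ Real.cosh x := by
        rw [Real.sinh_eq, Real.cosh_eq]; have := (Real.exp_pos (-x)).le; linarith
      have h2 : Real.sinh y ≤ Real.cosh y := by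
        rw [Real.sinh_eq, Real.cosh_eq]; have := (Real.exp_pos (-y)).le; linarith
      exact mul_le_mul h1 h2 hsy.le (Real.cosh_pos x).le
    have p2 : 2 * u₂ ^ 2 * (Real.sinh x * Real.sinh y) ≤ Real.exp t / 2 := by
      rw [hu₂sq, hsxe, hsye]
      exact aux2 ha0 hb0 ha1 hb1 hE
    linarith
  have F2 : 2 * Real.log (1 + u₂) ≤ f := key_lemma hu₂0.le hf hb2'
  -- Case split on t ≤ x + y
  rcases le_total t (x + y) with hcase | hcase
  · -- t ≤ x + y
    have hp1 : ppart (x + y - t) = x + y - t := max_eq_left (by linarith)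
    have hp2 : ppart (t - x - y) = 0 := max_eq_right (by linarith)
    have hexp : Real.exp (-(1/2) * (x + y - t)) = u₂ := by
      rw [hu₂_def]; congr 1; ring
    rw [hp1, hp2, hexp]
    have hu₂1 : u₂ ≤ 1 := Real.exp_le_one_iff.mpr (by linarith)
    have F2' : u₂ ≤ f := le_trans (u_le_two_log hu₂0.le hu₂1) F2
    have : a + b = 2 * u₁ := by rw [hu₁_def]; ring
    linarith
  · -- x + y ≤ t
    have hp1 : ppart (x + y - t) = 0 := max_eq_right (by linarith)
    have hp2 : ppart (t - x - y) = t - x - y := max_eq_left (by linarith)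
    rw [hp1, hp2, mul_zero, Real.exp_zero]
    have hu₂1 : 1 ≤ u₂ := Real.one_le_exp (by linarith)
    have hl2 : Real.log 2 ≤ Real.log (1 + u₂) :=
      (Real.log_le_log_iff (by norm_num) (by linarith)).mpr (by linarith)
    have hlw : (t - x - y) / 2 ≤ Real.log (1 + u₂) := by
      calc (t - x - y) / 2 = Real.log u₂ := by rw [hu₂_def, Real.log_exp]
        _ ≤ Real.log (1 + u₂) := (Real.log_le_log_iff hu₂0 (by linarith)).mpr (by linarith)
    have hlog2 : (0.6931471803 : ℝ) < Real.log 2 := Real.log_two_gt_d9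
    linarith
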